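/- Backward direction of the kSUM reduction for two machines: let x_1,…,x_h be positive integers, let T = Σ_{i=1}^h x_i, and let k, B be positive integers with 1 ≤ k < h and B < T. Consider the two-machine JIT flow-shop instance with kh+1 jobs: for each i ∈ {1,…,k} and j ∈ {1,…,h} a job J_{ij} with p^(1)_{ij} = x_j, p^(2)_{ij} = 1, w_{ij} = T + x_j, d_{ij} = iT; and a job J_{kh+1} with p^(1)_{kh+1} = (k+1)T − B, p^(2)_{kh+1} = 1, w_{kh+1} = k²(T+1)², d_{kh+1} = (k+1)T + 1. If this instance admits a feasible set E with Σ_{j∈E} w_j ≥ kT + B + k²(T+1)², then there exist indices j_1,…,j_k ∈ {1,…,h} (not necessarily distinct) with x_{j_1} + … + x_{j_k} = B. -/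

import Mathlib

open Finset

/-- A just-in-time flow-shop instance on `m` machines with jobs of type `J`:
`p i j` is the (positive integer) processing time of job `j` on machine `i`,
`d j` its positive integer due date and `w j` its positive integer weight. -/
structure JITInstance (m : ℕ) (J : Type) where
  p : Fin m → J → ℕ
  d : J → ℕ
  w : J → ℕ
  p_pos : ∀ i j, 0 < p i j
  d_pos : ∀ j, 0 < d j
  w_pos : ∀ j, 0 < w j

/-- `S` is a JIT schedule of the job set `E`: on every machine the processing
intervals `(S i j, S i j + p i j]` of distinct jobs of `E` are pairwise disjoint,
each job's operation on machine `i+1` starts no earlier than its completion on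
machine `i`, and every job of `E` completes on the last machine exactly at its
due date.  (Start times are nonnegative automatically, being naturals.) -/
def IsJITSchedule {m : ℕ} {J : Type} (I : JITInstance m J)
    (E : Finset J) (S : Fin m → J → ℕ) : Prop :=
  (∀ i : Fin m, ∀ j ∈ E, ∀ j' ∈ E, j ≠ j' →
      S i j + I.p i j ≤ S i j' ∨ S i j' + I.p i j' ≤ S i j) ∧
  (∀ j ∈ E, ∀ i i' : Fin m, i'.val = i.val + 1 →
      S i j + I.p i j ≤ S i' j) ∧
  (∀ j ∈ E, ∀ i : Fin m, i.val = m - 1 →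
      S i j + I.p i j = I.d j)

/-- A job set is feasible if it admits a JIT schedule. -/
def Feasible {m : ℕ} {J : Type} (I : JITInstance m J) (E : Finset J) : Prop :=
  ∃ S : Fin m → J → ℕ, IsJITSchedule I E S

/-- The two-machine JIT flow-shop instance constructed in the kSUM reduction:
for each `i ∈ {1,…,k}`, `j ∈ {1,…,h}` a job `J_{ij}` (encoded `Sum.inl (i, j)`,
0-indexed) with `p¹ = x j`, `p² = 1`, `w = T + x j`, `d = iT`, and one extra
job `J_{kh+1}` (encoded `Sum.inr ()`) with `p¹ = (k+1)T - B`, `p² = 1`,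
`w = k²(T+1)²`, `d = (k+1)T + 1`, where `T = ∑ i, x i`. -/
def ksumInstance2 (h k B : ℕ) (x : Fin h → ℕ) (hx : ∀ i, 0 < x i)
    (hk : 1 ≤ k) (hB : 0 < B) (hBT : B < ∑ i, x i) :
    JITInstance 2 (Fin k × Fin h ⊕ Unit) where
  p := fun i jb =>
    if i.val = 0 then
      Sum.elim (fun q => x q.2) (fun _ => (k + 1) * (∑ i, x i) - B) jb
    else 1
  d := Sum.elim (fun q => (q.1.val + 1) * (∑ i, x i))
    (fun _ => (k + 1) * (∑ i, x i) + 1)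
  w := Sum.elim (fun q => (∑ i, x i) + x q.2)
    (fun _ => k ^ 2 * ((∑ i, x i) + 1) ^ 2)
  p_pos := by
    intro i jb
    try dsimp only
    split
    · rcases jb with ⟨a, j⟩ | u
      · simpa using hx j
      · simp only [Sum.elim_inr]
        have h1 : (∑ i, x i) ≤ (k + 1) * (∑ i, x i) :=
          Nat.le_mul_of_pos_left _ (by omega)
        omega
    · exact one_pos
  d_pos := by
    rintro (⟨a, j⟩ | u)
    · simp only [Sum.elim_inl]
      exact Nat.mul_pos (by omega) (by omega)
    · simp only [Sum.elim_inr]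
      omega
  w_pos := by
    rintro (⟨a, j⟩ | u)
    · simp only [Sum.elim_inl]
      have := hx j
      omega
    · simp only [Sum.elim_inr]
      exact Nat.mul_pos (pow_pos (by omega : 0 < k) 2)
        (pow_pos (by omega : 0 < (∑ i, x i) + 1) 2)

/-- backward direction of the kSUM reduction for two machines.
If the constructed instance has a feasible set of total weight at least
`kT + B + k²(T+1)²`, then some `k` of the numbers `x 0, …, x (h-1)` (with
repetitions allowed) sum to `B`. -/
theorem ksum_two_machines_backward (h k B : ℕ) (x : Fin h → ℕ)
    (hx : ∀ i, 0 < x i) (hk : 1 ≤ k) (hkh : k < h) (hB : 0 < B)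
    (hBT : B < ∑ i, x i)
    (E : Finset (Fin k × Fin h ⊕ Unit))
    (hfeas : Feasible (ksumInstance2 h k B x hx hk hB hBT) E)
    (hwt : k * (∑ i, x i) + B + k ^ 2 * ((∑ i, x i) + 1) ^ 2
      ≤ ∑ jb ∈ E, (ksumInstance2 h k B x hx hk hB hBT).w jb) :
    ∃ f : Fin k → Fin h, ∑ i, x (f i) = B := by
    classical
  obtain ⟨S, hdisj, hprec, hdue⟩ := hfeas
  set T := ∑ i, x i with hTdef
  have hTpos : 0 < T := lt_of_le_of_lt (Nat.zero_le B) hBT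
  set I := ksumInstance2 h k B x hx hk hB hBT with hI
  -- basic arithmetic about the instance
  have hp0l : ∀ q : Fin k × Fin h, I.p 0 (Sum.inl q) = x q.2 := fun q => rfl
  have hp0r : I.p 0 (Sum.inr ()) = (k + 1) * T - B := rfl
  have hp1 : ∀ jb, I.p 1 jb = 1 := fun jb => rfl
  have hdl : ∀ q : Fin k × Fin h, I.d (Sum.inl q) = (q.1.val + 1) * T := fun q => rfl
  have hdr : I.d (Sum.inr ()) = (k + 1) * T + 1 := rfl
  have hval01 : ((1 : Fin 2)).val = ((0 : Fin 2)).val + 1 := rfl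
  have hval1 : ((1 : Fin 2)).val = 2 - 1 := rfl
  -- due date facts on machine 1 (second machine)
  have hS1 : ∀ jb ∈ E, S 1 jb + 1 = I.d jb := by
    intro jb hjb
    have := hdue jb hjb 1 hval1
    rwa [hp1] at this
  -- precedence
  have hS0 : ∀ jb ∈ E, S 0 jb + I.p 0 jb ≤ S 1 jb := fun jb hjb =>
    hprec jb hjb 0 1 hval01
  set Es : Finset (Fin k × Fin h) := E.toLeft with hEs
  have hmemEs : ∀ q : Fin k × Fin h, q ∈ Es ↔ Sum.inl q ∈ E := by
    intro q; simp [hEs]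
  -- each small job in E finishes machine 0 before k*T
  have hsmall0 : ∀ q ∈ Es, S 0 (Sum.inl q) + x q.2 + 1 ≤ k * T := by
    intro q hq
    have hqE := (hmemEs q).mp hq
    have h1 := hS1 _ hqE
    rw [hdl] at h1
    have h0 := hS0 _ hqE
    rw [hp0l] at h0
    have hle : (q.1.val + 1) * T ≤ k * T :=
      Nat.mul_le_mul_right _ q.1.2
    omega
  -- at most one job per row
  have hinj : Set.InjOn (fun q : Fin k × Fin h => q.1) ↑Es := by
    intro q hq q' hq' hfst
    by_contra hne
    have hqE := (hmemEs q).mp hq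
    have hq'E := (hmemEs q').mp hq'
    have hne' : (Sum.inl q : Fin k × Fin h ⊕ Unit) ≠ Sum.inl q' := by
      simpa using hne
    have hd := hdisj 1 _ hqE _ hq'E hne'
    rw [hp1, hp1] at hd
    have h1 := hS1 _ hqE
    have h1' := hS1 _ hq'E
    rw [hdl] at h1 h1'
    simp only at hfst
    rw [hfst] at h1
    omega
  have hcard : Es.card ≤ k := by
    have := Finset.card_le_card_of_injOn (fun q : Fin k × Fin h => q.1)
      (fun q _ => Finset.mem_univ q.1) hinj
    simpa using this
  -- x j ≤ T always
  have hxT : ∀ j : Fin h, x j ≤ T := fun j =>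
    Finset.single_le_sum (fun i _ => Nat.zero_le (x i)) (Finset.mem_univ j)
  -- split the weight sum
  have hsum : ∑ jb ∈ E, I.w jb
      = (∑ q ∈ Es, (T + x q.2)) + E.toRight.card * (k ^ 2 * (T + 1) ^ 2) := by
    rw [← Finset.toLeft_disjSum_toRight (u := E), Finset.sum_disjSum]
    simp [I, ksumInstance2, Finset.sum_const, mul_comm]
    rfl
  have hsumEs : ∑ q ∈ Es, (T + x q.2) = Es.card * T + ∑ q ∈ Es, x q.2 := by
    rw [Finset.sum_add_distrib, Finset.sum_const, smul_eq_mul]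
  have hright : E.toRight.card ≤ 1 := by
    have : E.toRight ⊆ Finset.univ := Finset.subset_univ _
    calc E.toRight.card ≤ (Finset.univ : Finset Unit).card :=
          Finset.card_le_card this
      _ = 1 := rfl
  -- the long job is in E
  have hK1 : k * T + 1 ≤ k ^ 2 * (T + 1) ^ 2 := by
    have h1 : k * (T + 1) ≤ k ^ 2 * (T + 1) ^ 2 := by
      calc k * (T + 1) ≤ (k * (T + 1)) * (k * (T + 1)) :=
            Nat.le_mul_of_pos_left _ (Nat.mul_pos hk (by omega))
        _ = k ^ 2 * (T + 1) ^ 2 := by ring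
    nlinarith
  have hlong : Sum.inr () ∈ E := by
    by_contra hnotin
    have hr0 : E.toRight.card = 0 := by
      rw [Finset.card_eq_zero]
      ext u
      simp only [Finset.mem_toRight, Finset.notMem_empty, iff_false]
      cases u; exact hnotin
    have hsx : ∑ q ∈ Es, x q.2 ≤ Es.card * T := by
      calc ∑ q ∈ Es, x q.2 ≤ ∑ _q ∈ Es, T :=
            Finset.sum_le_sum (fun q _ => hxT q.2)
        _ = Es.card * T := by rw [Finset.sum_const, smul_eq_mul]
    have hct : Es.card * T ≤ k * T := Nat.mul_le_mul_right _ hcard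
    rw [hsum, hsumEs, hr0] at hwt
    omega
  -- facts about the long job
  have hL1 : S 1 (Sum.inr ()) + 1 = (k + 1) * T + 1 := by
    have := hS1 _ hlong; rwa [hdr] at this
  have hL0 : S 0 (Sum.inr ()) + ((k + 1) * T - B) ≤ (k + 1) * T := by
    have := hS0 _ hlong
    rw [hp0r] at this
    omega
  have hTP : T ≤ (k + 1) * T := Nat.le_mul_of_pos_left _ (by omega)
  have hkT : k * T + T = (k + 1) * T := by ring
  have hL0B : S 0 (Sum.inr ()) ≤ B := by omega
  -- every small job finishes machine 0 before the long job starts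
  have hbefore : ∀ q ∈ Es, S 0 (Sum.inl q) + x q.2 ≤ S 0 (Sum.inr ()) := by
    intro q hq
    have hqE := (hmemEs q).mp hq
    have hne : (Sum.inl q : Fin k × Fin h ⊕ Unit) ≠ Sum.inr () := by simp
    have hd := hdisj 0 _ hqE _ hlong hne
    rw [hp0l, hp0r] at hd
    rcases hd with hd | hd
    · exact hd
    · exfalso
      have := hsmall0 q hq
      omega
  -- sum of processing times of small jobs is at most B
  set It : Fin k × Fin h → Finset ℕ :=
    fun q => Finset.Ioc (S 0 (Sum.inl q)) (S 0 (Sum.inl q) + x q.2) with hIt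
  have hItcard : ∀ q, (It q).card = x q.2 := by
    intro q; simp [hIt]
  have hItdisj : ∀ q ∈ Es, ∀ q' ∈ Es, q ≠ q' → Disjoint (It q) (It q') := by
    intro q hq q' hq' hne
    have hqE := (hmemEs q).mp hq
    have hq'E := (hmemEs q').mp hq'
    have hne' : (Sum.inl q : Fin k × Fin h ⊕ Unit) ≠ Sum.inl q' := by simpa using hne
    have hd := hdisj 0 _ hqE _ hq'E hne'
    rw [hp0l, hp0l] at hd
    rw [Finset.disjoint_left]
    intro t ht ht'
    simp only [hIt, Finset.mem_Ioc] at ht ht'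
    omega
  have hItsub : ∀ q ∈ Es, It q ⊆ Finset.Ioc 0 B := by
    intro q hq t ht
    simp only [hIt, Finset.mem_Ioc] at ht ⊢
    have := hbefore q hq
    omega
  have hsB : ∑ q ∈ Es, x q.2 ≤ B := by
    calc ∑ q ∈ Es, x q.2 = ∑ q ∈ Es, (It q).card := by
          exact Finset.sum_congr rfl (fun q _ => (hItcard q).symm)
      _ = (Es.biUnion It).card := (Finset.card_biUnion hItdisj).symm
      _ ≤ (Finset.Ioc 0 B).card := Finset.card_le_card
          (Finset.biUnion_subset.mpr hItsub)
      _ = B := by simp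
  -- now force exact values
  have hr1 : E.toRight.card = 1 := by
    refine le_antisymm hright ?_
    exact Finset.card_pos.mpr ⟨(), Finset.mem_toRight.mpr hlong⟩
  rw [hsum, hsumEs, hr1, one_mul] at hwt
  have hcardk : Es.card = k := by
    by_contra hne
    have : Es.card + 1 ≤ k := by omega
    have hct : (Es.card + 1) * T ≤ k * T := Nat.mul_le_mul_right _ this
    have : Es.card * T + T ≤ k * T := by
      calc Es.card * T + T = (Es.card + 1) * T := by ring
        _ ≤ k * T := hct
    omega
  have hsum_eq : ∑ q ∈ Es, x q.2 = B := by
    rw [hcardk] at hwt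
    omega
  -- extract the function f
  have himg : Finset.image (fun q : Fin k × Fin h => q.1) Es = Finset.univ := by
    apply Finset.eq_univ_of_card
    simp [Finset.card_image_of_injOn hinj, hcardk]
  have hex : ∀ i : Fin k, ∃ q : Fin k × Fin h, q ∈ Es ∧ q.1 = i := by
    intro i
    have : i ∈ Finset.image (fun q : Fin k × Fin h => q.1) Es := by
      rw [himg]; exact Finset.mem_univ i
    obtain ⟨q, hq, hq1⟩ := Finset.mem_image.mp this
    exact ⟨q, hq, hq1⟩
  choose g hg1 hg2 using hex
  refine ⟨fun i => (g i).2, ?_⟩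
  have hginj : Function.Injective g := by
    intro i i' hii
    rw [← hg2 i, ← hg2 i', hii]
  have himgg : Finset.image g Finset.univ = Es := by
    apply Finset.eq_of_subset_of_card_le
    · intro q hq
      obtain ⟨i, _, rfl⟩ := Finset.mem_image.mp hq
      exact hg1 i
    · rw [Finset.card_image_of_injective _ hginj, Finset.card_univ,
        Fintype.card_fin, hcardk]
  rw [← himgg] at hsum_eq
  rw [Finset.sum_image (fun i _ i' _ hii => hginj hii)] at hsum_eq
  exact hsum_eq
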